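/- (Upper bound (A.1), one-parameter case.) Suppose the one-parameter design problem of the context satisfies: (i) for every x₀ ∈ 𝒳 there exists β̃ ∈ ℬ with I(x₀,β) ≤ c₀ M(ξ[β̃],β) for all β ∈ ℬ; and (ii) Q(β,β̃) ≤ c₁ |ℓ(β) − ℓ(β̃)|^{−γ} for all β, β̃ ∈ ℬ, with constants c₀, c₁, γ > 0. Let B = ℓ(β_max) − ℓ(β_min) > 0. Then every design ξ supported at at most N points satisfies Φ(ξ) = inf_{β∈ℬ} M(ξ,β)/M(ξ[β],β) ≤ c₀ c₁ (2(N+1)/B)^γ. -/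

import Mathlib

open scoped BigOperators

/-- An approximate design: a finitely supported probability measure on `X`,
given by its support points and positive weights summing to one. -/
structure Design (X : Type*) where
  support : Finset X
  w : X → ℝ
  w_pos : ∀ x ∈ support, 0 < w x
  w_zero : ∀ x ∉ support, w x = 0
  sum_one : ∑ x ∈ support, w x = 1

/-- Information of a design in the one-parameter case: `M(ξ,β) = ∑ₖ wₖ I(xₖ,β)`. -/
noncomputable def info {X : Type*} (I : X → ℝ → ℝ) (ξ : Design X) (β : ℝ) : ℝ :=
  ∑ x ∈ ξ.support, ξ.w x * I x β

/-- Upper bound (A.1) in the one-parameter case: under conditions (2.9) and (2.4)/(3.1),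
every design supported at at most `N` points satisfies
`Φ(ξ) ≤ c₀ c₁ (2(N+1)/B)^γ` where `B = ℓ(β_max) − ℓ(β_min)`. -/
theorem maximin_upper_bound_one_dim
    (X : Type*) [Nonempty X] (βmin βmax : ℝ) (hββ : βmin < βmax)
    (I : X → ℝ → ℝ) (hI : ∀ x : X, ∀ β ∈ Set.Icc βmin βmax, 0 ≤ I x β)
    (ℓ : ℝ → ℝ)
    (hmono : MonotoneOn ℓ (Set.Icc βmin βmax))
    (hcont : ContinuousOn ℓ (Set.Icc βmin βmax))
    (ξopt : ℝ → Design X)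
    (hpos : ∀ β ∈ Set.Icc βmin βmax, 0 < info I (ξopt β) β)
    (hopt : ∀ β ∈ Set.Icc βmin βmax, ∀ ξ : Design X, info I ξ β ≤ info I (ξopt β) β)
    (c₀ c₁ γ : ℝ) (hc₀ : 0 < c₀) (hc₁ : 0 < c₁) (hγ : 0 < γ)
    -- condition (i) = (2.9) for m = 1
    (h29 : ∀ x₀ : X, ∃ b ∈ Set.Icc βmin βmax,
        ∀ β ∈ Set.Icc βmin βmax, I x₀ β ≤ c₀ * info I (ξopt b) β)
    -- condition (ii) = (2.4)/(3.1):  Q(β,β̃) ≤ c₁ |ℓ(β) − ℓ(β̃)|^(−γ)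
    (h24 : ∀ β ∈ Set.Icc βmin βmax, ∀ b ∈ Set.Icc βmin βmax,
        (info I (ξopt b) β / info I (ξopt β) β) * |ℓ β - ℓ b| ^ γ ≤ c₁)
    (B : ℝ) (hB : B = ℓ βmax - ℓ βmin) (hBpos : 0 < B)
    (N : ℕ) (ξ : Design X) (hcard : ξ.support.card ≤ N) :
    (⨅ β : Set.Icc βmin βmax, info I ξ (β : ℝ) / info I (ξopt (β : ℝ)) (β : ℝ))
      ≤ c₀ * c₁ * (2 * ((N : ℝ) + 1) / B) ^ γ := by

  classical
  have hIcc : βmin ∈ Set.Icc βmin βmax := ⟨le_rfl, le_of_lt hββ⟩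
  set d : ℝ := B / ((N : ℝ) + 1) with hd
  have hN1 : (0:ℝ) < (N : ℝ) + 1 := by positivity
  have hdpos : 0 < d := by positivity
  -- choose for each support point a parameter b x
  choose b hbmem hbI using h29
  set T : Finset ℝ := ξ.support.image (fun x => ℓ (b x)) with hT
  have hTcard : T.card ≤ N := le_trans Finset.card_image_le hcard
  -- pigeonhole: find a point t in [ℓ βmin, ℓ βmax] far from all of T
  have hmid : ∃ t ∈ Set.Icc (ℓ βmin) (ℓ βmax), ∀ s ∈ T, d / 2 ≤ |t - s| := by
    by_contra hcon
    push_neg at hcon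
    have hm : ∀ i : Fin (N + 1),
        (ℓ βmin + ((i : ℝ) + 1/2) * d) ∈ Set.Icc (ℓ βmin) (ℓ βmax) := by
      intro i
      constructor
      · nlinarith [i.2, (show (0:ℝ) ≤ (i:ℝ) from Nat.cast_nonneg _)]
      · have hi : (i : ℝ) ≤ (N : ℝ) := by
          exact_mod_cast Nat.lt_succ_iff.mp i.2
        have : ((i : ℝ) + 1/2) * d ≤ ((N : ℝ) + 1) * d := by nlinarith
        have hdB : ((N : ℝ) + 1) * d = B := by rw [hd]; field_simp
        have hℓ : ℓ βmax = ℓ βmin + B := by rw [hB]; ring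
        linarith
    choose s hsT hsd using fun i : Fin (N + 1) =>
      hcon (ℓ βmin + ((i : ℝ) + 1/2) * d) (hm i)
    have hinj : Set.InjOn s (Finset.univ : Finset (Fin (N+1))) := by
      intro i _ j _ hij
      by_contra hne
      have h1 := hsd i
      have h2 := hsd j
      rw [hij] at h1
      have hij1 : (1:ℝ) ≤ |(i : ℝ) - (j : ℝ)| := by
        have : (i : ℝ) ≠ (j : ℝ) := by
          simp only [ne_eq, Nat.cast_injective.eq_iff]
          exact_mod_cast fun h => hne (Fin.ext h)
        have h0 : ((i:ℕ) : ℝ) - ((j:ℕ) : ℝ) ≠ 0 := sub_ne_zero.mpr this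
        rcases lt_or_gt_of_ne this with h | h
        · rw [abs_sub_comm, abs_of_pos (by linarith)]
          have : (j:ℕ) ≥ (i:ℕ) + 1 := by
            have : (i:ℕ) < (j:ℕ) := by exact_mod_cast h
            omega
          have : ((i:ℕ):ℝ) + 1 ≤ ((j:ℕ):ℝ) := by exact_mod_cast this
          linarith
        · rw [abs_of_pos (by linarith)]
          have : (i:ℕ) ≥ (j:ℕ) + 1 := by
            have : (j:ℕ) < (i:ℕ) := by exact_mod_cast h
            omega
          have : ((j:ℕ):ℝ) + 1 ≤ ((i:ℕ):ℝ) := by exact_mod_cast this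
          linarith
      have hdist : |(ℓ βmin + ((i : ℝ) + 1/2) * d) - (ℓ βmin + ((j : ℝ) + 1/2) * d)|
          = |(i : ℝ) - (j : ℝ)| * d := by
        rw [show (ℓ βmin + ((i : ℝ) + 1/2) * d) - (ℓ βmin + ((j : ℝ) + 1/2) * d)
            = ((i : ℝ) - (j : ℝ)) * d by ring, abs_mul, abs_of_pos hdpos]
      have htri : |(ℓ βmin + ((i : ℝ) + 1/2) * d) - (ℓ βmin + ((j : ℝ) + 1/2) * d)| < d := by
        calc |(ℓ βmin + ((i : ℝ) + 1/2) * d) - (ℓ βmin + ((j : ℝ) + 1/2) * d)|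
            ≤ |(ℓ βmin + ((i : ℝ) + 1/2) * d) - s j|
              + |s j - (ℓ βmin + ((j : ℝ) + 1/2) * d)| := abs_sub_le _ _ _
          _ < d/2 + d/2 := by
              rw [abs_sub_comm (s j)]
              exact add_lt_add h1 h2
          _ = d := by ring
      rw [hdist] at htri
      nlinarith
    have hcard2 : (Finset.univ : Finset (Fin (N+1))).card ≤ T.card :=
      Finset.card_le_card_of_injOn s (fun i _ => hsT i) hinj
    simp only [Finset.card_univ, Fintype.card_fin] at hcard2
    omega
  obtain ⟨t, htmem, htfar⟩ := hmid
  -- find βs with ℓ βs = t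
  obtain ⟨βs, hβsmem, hlβs⟩ := intermediate_value_Icc (le_of_lt hββ) hcont htmem
  -- general nonnegativity of info on the interval
  have info_nonneg : ∀ (η : Design X), ∀ β ∈ Set.Icc βmin βmax, 0 ≤ info I η β := by
    intro η β hβ
    exact Finset.sum_nonneg fun x hx =>
      mul_nonneg (le_of_lt (η.w_pos x hx)) (hI x β hβ)
  set M : ℝ := info I (ξopt βs) βs with hM
  have hMpos : 0 < M := hpos βs hβsmem
  set K : ℝ := c₀ * c₁ * ((d/2) ^ γ)⁻¹ with hK
  have hd2pos : (0:ℝ) < d/2 := by linarith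
  have hd2γpos : (0:ℝ) < (d/2) ^ γ := Real.rpow_pos_of_pos hd2pos γ
  -- key bound for each support point
  have hkey : ∀ x ∈ ξ.support, I x βs ≤ K * M := by
    intro x hx
    have hbx := hbmem x
    have hQ : (info I (ξopt (b x)) βs / M) * |ℓ βs - ℓ (b x)| ^ γ ≤ c₁ :=
      h24 βs hβsmem (b x) hbx
    have hfar : d / 2 ≤ |ℓ βs - ℓ (b x)| := by
      rw [hlβs]
      exact htfar (ℓ (b x)) (Finset.mem_image_of_mem _ hx)
    have hQnn : 0 ≤ info I (ξopt (b x)) βs / M :=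
      div_nonneg (info_nonneg _ _ hβsmem) (le_of_lt hMpos)
    have hpow : (d/2) ^ γ ≤ |ℓ βs - ℓ (b x)| ^ γ :=
      Real.rpow_le_rpow (le_of_lt hd2pos) hfar (le_of_lt hγ)
    have hQle : (info I (ξopt (b x)) βs / M) * (d/2) ^ γ ≤ c₁ :=
      le_trans (mul_le_mul_of_nonneg_left hpow hQnn) hQ
    have hQle2 : info I (ξopt (b x)) βs / M ≤ c₁ * ((d/2) ^ γ)⁻¹ := by
      rw [← le_div_iff₀ hd2γpos] at hQle
      rw [div_eq_mul_inv] at hQle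
      exact hQle
    have hMx : info I (ξopt (b x)) βs ≤ c₁ * ((d/2) ^ γ)⁻¹ * M := by
      have := mul_le_mul_of_nonneg_right hQle2 (le_of_lt hMpos)
      rwa [div_mul_cancel₀ _ (ne_of_gt hMpos)] at this
    calc I x βs ≤ c₀ * info I (ξopt (b x)) βs := hbI x βs hβsmem
      _ ≤ c₀ * (c₁ * ((d/2) ^ γ)⁻¹ * M) :=
          mul_le_mul_of_nonneg_left hMx (le_of_lt hc₀)
      _ = K * M := by rw [hK]; ring
  -- bound the ratio at βs
  have hratio : info I ξ βs / M ≤ K := by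
    rw [div_le_iff₀ hMpos]
    calc info I ξ βs = ∑ x ∈ ξ.support, ξ.w x * I x βs := rfl
      _ ≤ ∑ x ∈ ξ.support, ξ.w x * (K * M) := by
          refine Finset.sum_le_sum fun x hx => ?_
          exact mul_le_mul_of_nonneg_left (hkey x hx) (le_of_lt (ξ.w_pos x hx))
      _ = (∑ x ∈ ξ.support, ξ.w x) * (K * M) := by rw [← Finset.sum_mul]
      _ = K * M := by rw [ξ.sum_one, one_mul]
  -- K equals the claimed bound
  have hKeq : K = c₀ * c₁ * (2 * ((N : ℝ) + 1) / B) ^ γ := by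
    have h1 : (2 * ((N : ℝ) + 1) / B) = (d/2)⁻¹ := by
      rw [hd]; field_simp
    rw [hK, h1, Real.inv_rpow (le_of_lt hd2pos)]
  rw [← hKeq]
  -- conclude via the infimum
  have hbdd : BddBelow (Set.range fun β : Set.Icc βmin βmax =>
      info I ξ (β : ℝ) / info I (ξopt (β : ℝ)) (β : ℝ)) := by
    refine ⟨0, ?_⟩
    rintro r ⟨β, rfl⟩
    exact div_nonneg (info_nonneg ξ β β.2) (le_of_lt (hpos β β.2))
  exact le_trans (ciInf_le hbdd (⟨βs, hβsmem⟩ : Set.Icc βmin βmax)) hratio
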